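/- Let 𝒜 ∈ Sp(2d,ℝ) with d×d blocks A_{ij} (1≤i,j≤4). Then the 2d×2d matrix M_𝒜 := [[A_{11}ᵀA_{31}+A_{21}ᵀA_{41}, A_{31}ᵀA_{13}+A_{41}ᵀA_{23}],[A_{13}ᵀA_{31}+A_{23}ᵀA_{41}, A_{13}ᵀA_{33}+A_{23}ᵀA_{43}]] is symmetric. -/
import Mathlib


open Matrix

/-- Index type for `2d × 2d` matrices, viewed as two `d`-blocks. -/
abbrev I2 (d : ℕ) := Fin d ⊕ Fin d

/-- Index type for `4d × 4d` matrices, viewed as four `d`-blocks. -/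
abbrev I4 (d : ℕ) := I2 d ⊕ I2 d

/-- The standard symplectic matrix `J = [[0, I], [-I, 0]]`. -/
def symplJ (α : Type*) [Fintype α] [DecidableEq α] : Matrix (α ⊕ α) (α ⊕ α) ℝ :=
  fromBlocks 0 1 (-1) 0

/-- `A` is symplectic if `Aᵀ J A = J`. -/
def IsSymplectic {α : Type*} [Fintype α] [DecidableEq α]
    (A : Matrix (α ⊕ α) (α ⊕ α) ℝ) : Prop :=
  Aᵀ * symplJ α * A = symplJ α

/-- Embedding of the "odd" block columns (blocks 1 and 3) of a `4d×4d` matrix. -/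
def colOdd (d : ℕ) : I2 d → I4 d :=
  Sum.elim (fun i => Sum.inl (Sum.inl i)) (fun i => Sum.inr (Sum.inl i))

/-- Embedding of the "even" block columns (blocks 2 and 4) of a `4d×4d` matrix. -/
def colEven (d : ℕ) : I2 d → I4 d :=
  Sum.elim (fun i => Sum.inl (Sum.inr i)) (fun i => Sum.inr (Sum.inr i))

/-- `E_𝒜 = [[A₁₁, A₁₃], [A₂₁, A₂₃]]`. -/
def subE {d : ℕ} (A : Matrix (I4 d) (I4 d) ℝ) : Matrix (I2 d) (I2 d) ℝ :=
  A.submatrix Sum.inl (colOdd d)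

/-- `ℰ_𝒜 = [[A₁₂, A₁₄], [A₂₂, A₂₄]]`. -/
def subEE {d : ℕ} (A : Matrix (I4 d) (I4 d) ℝ) : Matrix (I2 d) (I2 d) ℝ :=
  A.submatrix Sum.inl (colEven d)

/-- `F_𝒜 = [[A₃₁, A₃₃], [A₄₁, A₄₃]]`. -/
def subF {d : ℕ} (A : Matrix (I4 d) (I4 d) ℝ) : Matrix (I2 d) (I2 d) ℝ :=
  A.submatrix Sum.inr (colOdd d)

/-- `ℱ_𝒜 = [[A₃₂, A₃₄], [A₄₂, A₄₄]]`. -/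
def subFF {d : ℕ} (A : Matrix (I4 d) (I4 d) ℝ) : Matrix (I2 d) (I2 d) ℝ :=
  A.submatrix Sum.inr (colEven d)

/-- Row/column embedding of the `i`-th `d`-block (i = 1,2,3,4). -/
def r1 (d : ℕ) : Fin d → I4 d := fun i => Sum.inl (Sum.inl i)
def r2 (d : ℕ) : Fin d → I4 d := fun i => Sum.inl (Sum.inr i)
def r3 (d : ℕ) : Fin d → I4 d := fun i => Sum.inr (Sum.inl i)
def r4 (d : ℕ) : Fin d → I4 d := fun i => Sum.inr (Sum.inr i)

/-- The `d×d` block `A_{ij}` of a `4d×4d` matrix, given the row and column embeddings. -/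
def blk {d : ℕ} (A : Matrix (I4 d) (I4 d) ℝ) (ri cj : Fin d → I4 d) :
    Matrix (Fin d) (Fin d) ℝ :=
  A.submatrix ri cj

/-- The symmetric matrix `M_𝒜` associated with a symplectic `4d×4d` matrix `𝒜`. -/
def Mmat {d : ℕ} (A : Matrix (I4 d) (I4 d) ℝ) : Matrix (I2 d) (I2 d) ℝ :=
  fromBlocks
    ((blk A (r1 d) (r1 d))ᵀ * blk A (r3 d) (r1 d) + (blk A (r2 d) (r1 d))ᵀ * blk A (r4 d) (r1 d))
    ((blk A (r3 d) (r1 d))ᵀ * blk A (r1 d) (r3 d) + (blk A (r4 d) (r1 d))ᵀ * blk A (r2 d) (r3 d))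
    ((blk A (r1 d) (r3 d))ᵀ * blk A (r3 d) (r1 d) + (blk A (r2 d) (r3 d))ᵀ * blk A (r4 d) (r1 d))
    ((blk A (r1 d) (r3 d))ᵀ * blk A (r3 d) (r3 d) + (blk A (r2 d) (r3 d))ᵀ * blk A (r4 d) (r3 d))

/-- `𝒟_E = [[E⁻¹, 0], [0, Eᵀ]]`. -/
noncomputable def Dmat {α : Type*} [Fintype α] [DecidableEq α] (E : Matrix α α ℝ) :
    Matrix (α ⊕ α) (α ⊕ α) ℝ :=
  fromBlocks E⁻¹ 0 0 Eᵀ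

/-- `V_C = [[I, 0], [C, I]]`. -/
def Vmat {α : Type*} [Fintype α] [DecidableEq α] (C : Matrix α α ℝ) :
    Matrix (α ⊕ α) (α ⊕ α) ℝ :=
  fromBlocks 1 0 C 1

/-- `L = [[0, I], [I, 0]]` (`2d × 2d`). -/
def Lmat (d : ℕ) : Matrix (I2 d) (I2 d) ℝ :=
  fromBlocks 0 1 1 0

/-- `Lift(G)`: the `4d×4d` matrix with block rows `[I,0,0,0]`, `[0,G₁₁,0,G₁₂]`,
`[0,0,I,0]`, `[0,G₂₁,0,G₂₂]`. -/
def Lift {d : ℕ} (G : Matrix (I2 d) (I2 d) ℝ) : Matrix (I4 d) (I4 d) ℝ :=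
  fromBlocks
    (fromBlocks 1 0 0 (G.submatrix Sum.inl Sum.inl))
    (fromBlocks 0 0 0 (G.submatrix Sum.inl Sum.inr))
    (fromBlocks 0 0 0 (G.submatrix Sum.inr Sum.inl))
    (fromBlocks 1 0 0 (G.submatrix Sum.inr Sum.inr))

lemma sympl_key {α : Type*} [Fintype α] [DecidableEq α] {A : Matrix (α ⊕ α) (α ⊕ α) ℝ}
    (h : IsSymplectic A) (x y : α ⊕ α) :
    ∑ a : α, A (Sum.inl a) x * A (Sum.inr a) y
      - ∑ a : α, A (Sum.inr a) x * A (Sum.inl a) y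
      = symplJ α x y := by
  have := congrFun (congrFun h x) y
  simp [symplJ, Matrix.mul_apply, Fintype.sum_sum_type, Matrix.one_apply, mul_ite,
    Finset.sum_ite_eq, Finset.sum_ite_eq'] at this ⊢
  linarith [this]

/-- For `𝒜 ∈ Sp(2d,ℝ)`, the matrix `M_𝒜` is symmetric. -/
theorem Mmat_isSymm (d : ℕ) (𝒜 : Matrix (I4 d) (I4 d) ℝ) (h𝒜 : IsSymplectic 𝒜) :
    (Mmat 𝒜).IsSymm := by

  rw [Matrix.IsSymm]
  ext x y
  rcases x with i | i <;> rcases y with j | j <;>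
    simp only [Mmat, blk, r1, r2, r3, r4, transpose_apply, fromBlocks_apply₁₁,
      fromBlocks_apply₁₂, fromBlocks_apply₂₁, fromBlocks_apply₂₂, Matrix.add_apply,
      Matrix.mul_apply, submatrix_apply]
  · have key := sympl_key h𝒜 (Sum.inl (Sum.inl i) : I4 d) (Sum.inl (Sum.inl j))
    simp [symplJ, Fintype.sum_sum_type] at key
    have c1 : ∑ k, 𝒜 (Sum.inl (Sum.inl k)) (Sum.inl (Sum.inl j)) *
        𝒜 (Sum.inr (Sum.inl k)) (Sum.inl (Sum.inl i))
        = ∑ k, 𝒜 (Sum.inr (Sum.inl k)) (Sum.inl (Sum.inl i)) *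
        𝒜 (Sum.inl (Sum.inl k)) (Sum.inl (Sum.inl j)) :=
      Finset.sum_congr rfl fun k _ => mul_comm _ _
    have c2 : ∑ k, 𝒜 (Sum.inl (Sum.inr k)) (Sum.inl (Sum.inl j)) *
        𝒜 (Sum.inr (Sum.inr k)) (Sum.inl (Sum.inl i))
        = ∑ k, 𝒜 (Sum.inr (Sum.inr k)) (Sum.inl (Sum.inl i)) *
        𝒜 (Sum.inl (Sum.inr k)) (Sum.inl (Sum.inl j)) :=
      Finset.sum_congr rfl fun k _ => mul_comm _ _
    linarith [key, c1, c2]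
  · simp [mul_comm]
  · simp [mul_comm]
  · have key := sympl_key h𝒜 (Sum.inr (Sum.inl i) : I4 d) (Sum.inr (Sum.inl j))
    simp [symplJ, Fintype.sum_sum_type] at key
    have c1 : ∑ k, 𝒜 (Sum.inl (Sum.inl k)) (Sum.inr (Sum.inl j)) *
        𝒜 (Sum.inr (Sum.inl k)) (Sum.inr (Sum.inl i))
        = ∑ k, 𝒜 (Sum.inr (Sum.inl k)) (Sum.inr (Sum.inl i)) *
        𝒜 (Sum.inl (Sum.inl k)) (Sum.inr (Sum.inl j)) :=
      Finset.sum_congr rfl fun k _ => mul_comm _ _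
    have c2 : ∑ k, 𝒜 (Sum.inl (Sum.inr k)) (Sum.inr (Sum.inl j)) *
        𝒜 (Sum.inr (Sum.inr k)) (Sum.inr (Sum.inl i))
        = ∑ k, 𝒜 (Sum.inr (Sum.inr k)) (Sum.inr (Sum.inl i)) *
        𝒜 (Sum.inl (Sum.inr k)) (Sum.inr (Sum.inl j)) :=
      Finset.sum_congr rfl fun k _ => mul_comm _ _
    linarith [key, c1, c2]
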